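/- Let n ∈ ℕ, γ > 0, L > 0, and h : ℝⁿ → ℝ, and suppose that for every z ∈ [0,1]ⁿ the value f(z) = sup_{α ∈ ℝⁿ} ( h(α) − (γ/2) Σ_i z_i α_i² ) is finite and attained at some maximizer α*(z) with ‖α*(z)‖_∞ ≤ L. Then f is Lipschitz continuous on [0,1]ⁿ with respect to the ℓ₁ norm with constant (γ/2)·L²; that is, for all z, z' ∈ [0,1]ⁿ, |f(z) − f(z')| ≤ (γ/2) · L² · Σ_{i=1}^n |z_i − z'_i|. -/

import Mathlib

open scoped BigOperators

/-- Lipschitz continuity of the ridge regularized value function on the unit box,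
with respect to the ℓ₁ norm, with constant `(γ/2) * L²`. -/
theorem ridge_lipschitz (n : ℕ) (γ L : ℝ) (hγ : 0 < γ) (hL : 0 < L)
    (h : (Fin n → ℝ) → ℝ) (f : (Fin n → ℝ) → ℝ) (αstar : (Fin n → ℝ) → (Fin n → ℝ))
    (hub : ∀ z : Fin n → ℝ, (∀ i, 0 ≤ z i ∧ z i ≤ 1) →
      ∀ α : Fin n → ℝ, h α - (γ / 2) * ∑ i, z i * (α i) ^ 2 ≤ f z)
    (hatt : ∀ z : Fin n → ℝ, (∀ i, 0 ≤ z i ∧ z i ≤ 1) →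
      f z = h (αstar z) - (γ / 2) * ∑ i, z i * (αstar z i) ^ 2)
    (hbdd : ∀ z : Fin n → ℝ, (∀ i, 0 ≤ z i ∧ z i ≤ 1) → ∀ i, |αstar z i| ≤ L) :
    ∀ z z' : Fin n → ℝ, (∀ i, 0 ≤ z i ∧ z i ≤ 1) → (∀ i, 0 ≤ z' i ∧ z' i ≤ 1) →
      |f z - f z'| ≤ (γ / 2) * L ^ 2 * ∑ i, |z i - z' i| := by
  have key : ∀ z z' : Fin n → ℝ, (∀ i, 0 ≤ z i ∧ z i ≤ 1) → (∀ i, 0 ≤ z' i ∧ z' i ≤ 1) →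
      f z - f z' ≤ (γ / 2) * L ^ 2 * ∑ i, |z i - z' i| := by
    intro z z' hz hz'
    set α := αstar z with hα
    have h1 : f z = h α - (γ / 2) * ∑ i, z i * (α i) ^ 2 := hatt z hz
    have h2 : h α - (γ / 2) * ∑ i, z' i * (α i) ^ 2 ≤ f z' := hub z' hz' α
    have h3 : f z - f z' ≤ (γ / 2) * ∑ i, (z' i - z i) * (α i) ^ 2 := by
      rw [h1]
      have : (γ / 2) * ∑ i, (z' i - z i) * (α i) ^ 2
          = (γ / 2) * ∑ i, z' i * (α i) ^ 2 - (γ / 2) * ∑ i, z i * (α i) ^ 2 := by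
        rw [← mul_sub, ← Finset.sum_sub_distrib]
        congr 1; exact Finset.sum_congr rfl (fun i _ => by ring)
      rw [this]
      linarith
    refine h3.trans ?_
    rw [Finset.mul_sum, Finset.mul_sum]
    apply Finset.sum_le_sum
    intro i _
    have hb : |α i| ≤ L := hbdd z hz i
    have hb2 : (α i) ^ 2 ≤ L ^ 2 := by
      have := sq_abs (α i)
      nlinarith [abs_nonneg (α i)]
    have habs : z' i - z i ≤ |z i - z' i| := by
      rw [abs_sub_comm]; exact le_abs_self _
    have hnn : 0 ≤ (α i) ^ 2 := sq_nonneg _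
    have hγ2 : (0:ℝ) ≤ γ / 2 := by linarith
    calc γ / 2 * ((z' i - z i) * α i ^ 2) ≤ γ / 2 * (|z i - z' i| * L ^ 2) := by
          apply mul_le_mul_of_nonneg_left _ hγ2
          calc (z' i - z i) * α i ^ 2 ≤ |z i - z' i| * α i ^ 2 :=
                mul_le_mul_of_nonneg_right habs hnn
            _ ≤ |z i - z' i| * L ^ 2 :=
                mul_le_mul_of_nonneg_left hb2 (abs_nonneg _)
      _ = γ / 2 * L ^ 2 * |z i - z' i| := by ring
  intro z z' hz hz'
  rw [abs_sub_le_iff]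
  constructor
  · exact key z z' hz hz'
  · have := key z' z hz' hz
    have hsum : ∑ i, |z' i - z i| = ∑ i, |z i - z' i| := by
      apply Finset.sum_congr rfl; intro i _; rw [abs_sub_comm]
    linarith [hsum ▸ this]
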